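/- Let A be a replete reflective subcategory of a weakly Krull–Schmidt category C with biproduct ⊕, and suppose X ≅ Y ⊕ Z in C. Then X lies in A if and only if both Y and Z lie in A. -/

import Mathlib

open CategoryTheory CategoryTheory.Limits

/-- An object is indecomposable if whenever it is isomorphic to a biproduct of two objects,
one of the two summands is zero. -/
def IsIndecomposableObj {C : Type*} [Category C] [HasZeroMorphisms C]
    [HasBinaryBiproducts C] (X : C) : Prop :=
  ∀ (Y Z : C), Nonempty (X ≅ Y ⊞ Z) → (IsZero Y ∨ IsZero Z)

/-- A category with biproducts is weakly Krull–Schmidt if every object decomposes as a finite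
biproduct of indecomposables, uniquely up to permutation of the summands. -/
def WeaklyKrullSchmidt (C : Type*) [Category C] [HasZeroMorphisms C]
    [HasBinaryBiproducts C] [HasFiniteBiproducts C] : Prop :=
  (∀ X : C, ∃ (n : ℕ) (f : Fin n → C), (∀ i, IsIndecomposableObj (f i)) ∧
      Nonempty (X ≅ ⨁ f)) ∧
  (∀ (X : C) (n m : ℕ) (f : Fin n → C) (g : Fin m → C),
      (∀ i, IsIndecomposableObj (f i)) → (∀ j, IsIndecomposableObj (g j)) →
      Nonempty (X ≅ ⨁ f) → Nonempty (X ≅ ⨁ g) →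
      ∃ σ : Fin n ≃ Fin m, ∀ i, Nonempty (f i ≅ g (σ i)))

section Aux

variable {C : Type*} [Category C] (P : C → Prop)
  [(ObjectProperty.ι P).IsRightAdjoint]

/-- membership in a replete reflective subcategory is equivalent to the unit being iso -/
lemma aux_mem_iff_isIso_unit (hrep : ∀ {X Y : C}, (X ≅ Y) → P X → P Y) (X : C) :
    P X ↔ IsIso ((Adjunction.ofIsRightAdjoint (ObjectProperty.ι P)).unit.app X) := by
  constructor
  · intro hX
    exact Adjunction.isIso_unit_app_of_iso _
      (X := (⟨X, hX⟩ : ObjectProperty.FullSubcategory P)) (Iso.refl X)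
  · intro h
    obtain ⟨A, ⟨i⟩⟩ := Adjunction.mem_essImage_of_unit_isIso
      (Adjunction.ofIsRightAdjoint (ObjectProperty.ι P)) X
    exact hrep i A.property

/-- replete reflective subcategories are closed under retracts -/
lemma aux_mem_of_retract (hrep : ∀ {X Y : C}, (X ≅ Y) → P X → P Y)
    {X Y : C} (i : Y ⟶ X) (p : X ⟶ Y) (hip : i ≫ p = 𝟙 Y) (hX : P X) : P Y := by
  set adj := Adjunction.ofIsRightAdjoint (ObjectProperty.ι P) with hadj
  have hiso : IsIso (adj.unit.app X) := (aux_mem_iff_isIso_unit P hrep X).mp hX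
  rw [aux_mem_iff_isIso_unit P hrep]
  refine ⟨(ObjectProperty.ι P).map ((ObjectProperty.ι P).leftAdjoint.map i) ≫
    inv (adj.unit.app X) ≫ p, ?_, ?_⟩
  · have nat : adj.unit.app Y ≫ (ObjectProperty.ι P).map
        ((ObjectProperty.ι P).leftAdjoint.map i) = i ≫ adj.unit.app X := by
      simpa using (adj.unit.naturality i).symm
    rw [← Category.assoc, ← Category.assoc, nat]
    simp [hip]
  · have nat : adj.unit.app X ≫ (ObjectProperty.ι P).map
        ((ObjectProperty.ι P).leftAdjoint.map p) = p ≫ adj.unit.app Y := by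
      simpa using (adj.unit.naturality p).symm
    have h2 : inv (adj.unit.app X) ≫ p ≫ adj.unit.app Y =
        (ObjectProperty.ι P).map
          ((ObjectProperty.ι P).leftAdjoint.map p) := by
      rw [← nat, IsIso.inv_hom_id_assoc]
    rw [Category.assoc, Category.assoc, h2, ← Functor.map_comp, ← Functor.map_comp, hip]
    simp

end Aux

/-- Let `A` be a replete reflective subcategory (given by an isomorphism-closed predicate `P`
whose full-subcategory inclusion has a left adjoint) of a weakly Krull–Schmidt category `C`
with biproducts, and suppose `X ≅ Y ⊞ Z`. Then `X` lies in `A` iff both `Y` and `Z` do. -/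
theorem mem_replete_reflective_iff_summands_mem
    {C : Type*} [Category C] [HasZeroMorphisms C] [HasBinaryBiproducts C] [HasFiniteBiproducts C]
    (hKS : WeaklyKrullSchmidt C)
    (P : C → Prop) (hrep : ∀ {X Y : C}, (X ≅ Y) → P X → P Y)
    [(ObjectProperty.ι P).IsRightAdjoint]
    (X Y Z : C) (e : X ≅ Y ⊞ Z) :
    P X ↔ (P Y ∧ P Z) := by
  set adj := Adjunction.ofIsRightAdjoint (ObjectProperty.ι P) with hadj
  constructor
  · intro hX
    constructor
    · exact aux_mem_of_retract P hrep (biprod.inl ≫ e.inv) (e.hom ≫ biprod.fst)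
        (by simp) hX
    · exact aux_mem_of_retract P hrep (biprod.inr ≫ e.inv) (e.hom ≫ biprod.snd)
        (by simp) hX
  · rintro ⟨hY, hZ⟩
    have hYiso : IsIso (adj.unit.app Y) := (aux_mem_iff_isIso_unit P hrep Y).mp hY
    have hZiso : IsIso (adj.unit.app Z) := (aux_mem_iff_isIso_unit P hrep Z).mp hZ
    -- Y ⊞ Z is a retract of ι (L (Y ⊞ Z))
    have hB : P (Y ⊞ Z) := by
      refine aux_mem_of_retract P hrep (adj.unit.app (Y ⊞ Z))
        (biprod.lift
          ((ObjectProperty.ι P).map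
            ((ObjectProperty.ι P).leftAdjoint.map (biprod.fst : Y ⊞ Z ⟶ Y)) ≫
              inv (adj.unit.app Y))
          ((ObjectProperty.ι P).map
            ((ObjectProperty.ι P).leftAdjoint.map (biprod.snd : Y ⊞ Z ⟶ Z)) ≫
              inv (adj.unit.app Z))) ?_
        ((ObjectProperty.ι P).leftAdjoint.obj (Y ⊞ Z)).property
      apply biprod.hom_ext <;>
        simp only [Category.assoc, biprod.lift_fst, biprod.lift_snd, Category.id_comp]
      · have nat : adj.unit.app (Y ⊞ Z) ≫ (ObjectProperty.ι P).map
            ((ObjectProperty.ι P).leftAdjoint.map (biprod.fst : Y ⊞ Z ⟶ Y)) =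
            biprod.fst ≫ adj.unit.app Y := by
          simpa using (adj.unit.naturality (biprod.fst : Y ⊞ Z ⟶ Y)).symm
        rw [← Category.assoc, nat]
        simp
      · have nat : adj.unit.app (Y ⊞ Z) ≫ (ObjectProperty.ι P).map
            ((ObjectProperty.ι P).leftAdjoint.map (biprod.snd : Y ⊞ Z ⟶ Z)) =
            biprod.snd ≫ adj.unit.app Z := by
          simpa using (adj.unit.naturality (biprod.snd : Y ⊞ Z ⟶ Z)).symm
        rw [← Category.assoc, nat]
        simp
    exact hrep e.symm hB
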